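/- For two alternatives (m = 2), the Nash product rule for Leontief utilities coincides with the uniform phantom rule: for every profile with peaks p_1, …, p_n ∈ Δ^2, a distribution q = (1 − t, t) ∈ Δ^2 maximizes the Nash product of Leontief utilities if and only if t = med(p_{1,2}, …, p_{n,2}, 0, 1/n, 2/n, …, (n−1)/n, 1). -/

import Mathlib

open Finset

/-- Leontief utility of an agent with peak `p` at distribution `q`:
the minimum of `q j / p j` over alternatives `j` with `p j > 0`. -/
noncomputable def leontief {m : ℕ} (p q : Fin m → ℝ) : ℝ :=
  sInf {x : ℝ | ∃ j, 0 < p j ∧ x = q j / p j}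

/-- `q` maximizes the Nash product of Leontief utilities at profile `P`. -/
def NashMax {m n : ℕ} (P : Fin n → Fin m → ℝ) (q : Fin m → ℝ) : Prop :=
  q ∈ stdSimplex ℝ (Fin m) ∧
    ∀ q' ∈ stdSimplex ℝ (Fin m), ∏ i, leontief (P i) q' ≤ ∏ i, leontief (P i) q

/-- Median (middle element of the sorted list, for lists of odd length). -/
noncomputable def med (l : List ℝ) : ℝ :=
  (l.insertionSort (· ≤ ·)).getD (l.length / 2) 0

noncomputable def uu (a s : ℝ) : ℝ :=
  if a = 0 then 1 - s else if a = 1 then s else min ((1 - s) / (1 - a)) (s / a)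

lemma uu_nonneg {a s : ℝ} (ha0 : 0 ≤ a) (ha1 : a ≤ 1) (hs0 : 0 ≤ s) (hs1 : s ≤ 1) :
    0 ≤ uu a s := by
  unfold uu; split_ifs with h1 h2
  · linarith
  · linarith
  · have hlt : a < 1 := lt_of_le_of_ne ha1 h2
    have hgt : 0 < a := lt_of_le_of_ne ha0 (Ne.symm h1)
    have h3 : (0:ℝ) < 1 - a := by linarith
    have h4 : (0:ℝ) ≤ 1 - s := by linarith
    exact le_min (by positivity) (by positivity)

lemma uu_pos {a s : ℝ} (ha0 : 0 ≤ a) (ha1 : a ≤ 1) (hs0 : 0 < s) (hs1 : s < 1) :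
    0 < uu a s := by
  unfold uu; split_ifs with h1 h2
  · linarith
  · linarith
  · have hlt : a < 1 := lt_of_le_of_ne ha1 h2
    have hgt : 0 < a := lt_of_le_of_ne ha0 (Ne.symm h1)
    have h3 : (0:ℝ) < 1 - a := by linarith
    have h4 : (0:ℝ) < 1 - s := by linarith
    exact lt_min (by positivity) (by positivity)

lemma uu_le_right {a : ℝ} (s : ℝ) (ha : 0 < a) (ha1 : a ≤ 1) : uu a s ≤ s / a := by
  unfold uu; split_ifs with h1 h2
  · exact absurd h1 (ne_of_gt ha)
  · rw [h2]; simp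
  · exact min_le_right _ _

lemma uu_le_left {a : ℝ} (s : ℝ) (ha0 : 0 ≤ a) (ha : a < 1) : uu a s ≤ (1 - s) / (1 - a) := by
  unfold uu; split_ifs with h1 h2
  · rw [h1]; simp
  · exact absurd h2 (ne_of_lt ha)
  · exact min_le_left _ _

lemma uu_eval_right {a t : ℝ} (ha : 0 < a) (ha1 : a ≤ 1) (h : t ≤ a) : uu a t = t / a := by
  unfold uu; split_ifs with h1 h2
  · exact absurd h1 (ne_of_gt ha)
  · rw [h2]; simp
  · have ha' : a < 1 := lt_of_le_of_ne ha1 h2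
    refine min_eq_right ?_
    rw [div_le_div_iff₀ ha (by linarith)]
    nlinarith

lemma uu_eval_left {a t : ℝ} (ha0 : 0 ≤ a) (ha : a < 1) (h : a ≤ t) :
    uu a t = (1 - t) / (1 - a) := by
  unfold uu; split_ifs with h1 h2
  · rw [h1]; simp
  · exact absurd h2 (ne_of_lt ha)
  · have ha' : 0 < a := lt_of_le_of_ne ha0 (Ne.symm h1)
    refine min_eq_left ?_
    rw [div_le_div_iff₀ (by linarith) ha']
    nlinarith

lemma uu_midconcave {a : ℝ} (t t' : ℝ) (ha0 : 0 ≤ a) (ha1 : a ≤ 1) :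
    (uu a t + uu a t') / 2 ≤ uu a ((t + t') / 2) := by
  rcases eq_or_lt_of_le ha0 with h0 | h0
  · subst h0; norm_num [uu]; linarith
  rcases eq_or_lt_of_le ha1 with h1 | h1
  · subst h1; norm_num [uu]
  · have hd : (1:ℝ) - a ≠ 0 := by linarith
    have hane : a ≠ 0 := ne_of_gt h0
    have hL := uu_le_left t ha0 h1
    have hL' := uu_le_left t' ha0 h1
    have hR := uu_le_right t h0 ha1
    have hR' := uu_le_right t' h0 ha1
    have e1 : (1 - (t + t') / 2) / (1 - a) = ((1 - t) / (1 - a) + (1 - t') / (1 - a)) / 2 := by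
      rw [← add_div]; rw [div_div]; rw [div_eq_div_iff hd (by positivity)]; ring
    have e2 : ((t + t') / 2) / a = (t / a + t' / a) / 2 := by
      rw [← add_div, div_div, div_div, mul_comm]
    have hm : uu a ((t + t') / 2)
        = min ((1 - (t + t') / 2) / (1 - a)) (((t + t') / 2) / a) := by
      unfold uu
      rw [if_neg hane, if_neg (ne_of_lt h1)]
    rw [hm]
    refine le_min ?_ ?_
    · rw [e1]; linarith
    · rw [e2]; linarith

lemma uu_strictmid {a t t' : ℝ} (ha0 : 0 < a) (ha1 : a < 1) (htt : t < t')
    (he : uu a t = uu a t') : uu a t < uu a ((t + t') / 2) := by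
  have hm : uu a ((t + t') / 2)
      = min ((1 - (t + t') / 2) / (1 - a)) (((t + t') / 2) / a) := by
    unfold uu
    rw [if_neg (ne_of_gt ha0), if_neg (ne_of_lt ha1)]
  rw [hm]
  refine lt_min ?_ ?_
  · rw [he]
    refine lt_of_le_of_lt (uu_le_left t' ha0.le ha1) ?_
    exact div_lt_div_of_pos_right (by linarith) (by linarith)
  · refine lt_of_le_of_lt (uu_le_right t ha0 ha1.le) ?_
    exact div_lt_div_of_pos_right (by linarith) ha0


lemma pow_ineq {n A : ℕ} (hA : A ≤ n) {t0 s : ℝ} (ht0 : 0 < t0) (ht1 : t0 < 1)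
    (hs0 : 0 ≤ s) (hs1 : s ≤ 1)
    (hkey : ((A : ℝ) - n * t0) * (s - t0) ≤ 0) :
    (s / t0) ^ A * ((1 - s) / (1 - t0)) ^ (n - A) ≤ 1 := by
  rcases Nat.eq_zero_or_pos n with rfl | hn
  · interval_cases A
    simp
  set x : ℝ := s / t0 with hxdef
  set y : ℝ := (1 - s) / (1 - t0) with hydef
  have ht1' : (0:ℝ) < 1 - t0 := by linarith
  have h1s : (0:ℝ) ≤ 1 - s := by linarith
  have hx : 0 ≤ x := div_nonneg hs0 ht0.le
  have hy : 0 ≤ y := div_nonneg h1s ht1'.le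
  have hBcast : ((n - A : ℕ) : ℝ) = (n : ℝ) - A := by
    rw [Nat.cast_sub hA]
  have hnR : (0:ℝ) < n := by exact_mod_cast hn
  have key2 : (A:ℝ)*(s*(1-t0)) + ((n:ℝ)-A)*((1-s)*t0) ≤ n*(t0*(1-t0)) := by
    nlinarith [hkey]
  have hsum : (A : ℝ) * x + ((n : ℝ) - A) * y ≤ n := by
    have hrw : (A:ℝ) * x + ((n : ℝ) - A) * y
        = ((A:ℝ)*(s*(1-t0)) + ((n:ℝ)-A)*((1-s)*t0)) / (t0*(1-t0)) := by
      rw [hxdef, hydef]; field_simp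
    rw [hrw, div_le_iff₀ (mul_pos ht0 ht1')]
    linarith [key2]
  have hw1 : (0:ℝ) ≤ (A : ℝ) / n := by positivity
  have hAn : (A:ℝ) ≤ n := by exact_mod_cast hA
  have hw2 : (0:ℝ) ≤ ((n : ℝ) - A) / n := by
    apply div_nonneg (by linarith) hnR.le
  have hwsum : (A : ℝ) / n + ((n : ℝ) - A) / n = 1 := by field_simp; ring
  have hgm := Real.geom_mean_le_arith_mean2_weighted hw1 hw2 hx hy hwsum
  have hle1 : x ^ ((A:ℝ)/n) * y ^ (((n:ℝ) - A)/n) ≤ 1 := by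
    refine hgm.trans ?_
    rw [div_mul_eq_mul_div, div_mul_eq_mul_div, ← add_div, div_le_one hnR]
    linarith [hsum]
  have hz : (0:ℝ) ≤ x ^ ((A:ℝ)/n) * y ^ (((n:ℝ) - A)/n) := by positivity
  have hpow : (x ^ ((A:ℝ)/n) * y ^ (((n:ℝ) - A)/n)) ^ n = x ^ A * y ^ (n - A) := by
    rw [mul_pow, ← Real.rpow_natCast (x ^ ((A:ℝ)/n)) n, ← Real.rpow_natCast (y ^ (((n:ℝ)-A)/n)) n,
      ← Real.rpow_mul hx, ← Real.rpow_mul hy]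
    rw [div_mul_cancel₀ _ (ne_of_gt hnR), div_mul_cancel₀ _ (ne_of_gt hnR)]
    rw [← hBcast, Real.rpow_natCast, Real.rpow_natCast]
  calc x ^ A * y ^ (n - A) = (x ^ ((A:ℝ)/n) * y ^ (((n:ℝ) - A)/n)) ^ n := hpow.symm
    _ ≤ 1 := pow_le_one₀ hz hle1


lemma opt_aux {n : ℕ} {a : Fin n → ℝ} (ha : ∀ i, 0 ≤ a i ∧ a i ≤ 1) {t0 s : ℝ}
    (ht0 : 0 < t0) (ht1 : t0 < 1) (hs0 : 0 ≤ s) (hs1 : s ≤ 1)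
    (S : Finset (Fin n)) (hS1 : ∀ i ∈ S, t0 ≤ a i) (hS2 : ∀ i ∉ S, a i ≤ t0)
    (hkey : ((S.card : ℝ) - n * t0) * (s - t0) ≤ 0) :
    ∏ i, uu (a i) s ≤ ∏ i, uu (a i) t0 := by
  have hposS : ∀ i ∈ S, 0 < a i := fun i hi => lt_of_lt_of_le ht0 (hS1 i hi)
  have hlt1 : ∀ i ∈ Sᶜ, a i < 1 := fun i hi =>
    lt_of_le_of_lt (hS2 i (Finset.mem_compl.mp hi)) ht1
  have huni : ∀ i, 0 ≤ uu (a i) s :=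
    fun i => uu_nonneg (ha i).1 (ha i).2 hs0 hs1
  have hunit0 : ∀ i, 0 ≤ uu (a i) t0 :=
    fun i => uu_nonneg (ha i).1 (ha i).2 ht0.le ht1.le
  have e1 : ∏ i ∈ S, uu (a i) s ≤ ∏ i ∈ S, (uu (a i) t0 * (s / t0)) := by
    apply Finset.prod_le_prod (fun i _ => huni i)
    intro i hi
    rw [uu_eval_right (hposS i hi) (ha i).2 (hS1 i hi)]
    calc uu (a i) s ≤ s / a i := uu_le_right s (hposS i hi) (ha i).2
      _ = t0 / a i * (s / t0) := by
        rw [div_mul_div_comm, mul_comm t0 s, mul_div_mul_right _ _ (ne_of_gt ht0)]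
  have e2 : ∏ i ∈ Sᶜ, uu (a i) s ≤ ∏ i ∈ Sᶜ, (uu (a i) t0 * ((1 - s) / (1 - t0))) := by
    apply Finset.prod_le_prod (fun i _ => huni i)
    intro i hi
    rw [uu_eval_left (ha i).1 (hlt1 i hi) (hS2 i (Finset.mem_compl.mp hi))]
    calc uu (a i) s ≤ (1 - s) / (1 - a i) := uu_le_left s (ha i).1 (hlt1 i hi)
      _ = (1 - t0) / (1 - a i) * ((1 - s) / (1 - t0)) := by
        rw [div_mul_div_comm, mul_comm (1 - t0) (1 - s),
          mul_div_mul_right _ _ (by linarith : (1:ℝ) - t0 ≠ 0)]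
  have hcardblah : Sᶜ.card = n - S.card := by
    simp [Finset.card_compl]
  have hcardle : S.card ≤ n := by
    simpa using Finset.card_le_univ S
  have hp := pow_ineq hcardle ht0 ht1 hs0 hs1 hkey
  calc ∏ i, uu (a i) s
      = (∏ i ∈ S, uu (a i) s) * ∏ i ∈ Sᶜ, uu (a i) s :=
        (Finset.prod_mul_prod_compl S _).symm
    _ ≤ (∏ i ∈ S, (uu (a i) t0 * (s / t0))) *
        ∏ i ∈ Sᶜ, (uu (a i) t0 * ((1 - s) / (1 - t0))) := by
        apply mul_le_mul e1 e2 (Finset.prod_nonneg fun i _ => huni i)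
          (Finset.prod_nonneg ?_)
        intro i _
        have : (0:ℝ) ≤ s / t0 := div_nonneg hs0 ht0.le
        exact mul_nonneg (hunit0 i) this
    _ = ((∏ i ∈ S, uu (a i) t0) * ∏ i ∈ Sᶜ, uu (a i) t0) *
        ((s / t0) ^ S.card * ((1 - s) / (1 - t0)) ^ (n - S.card)) := by
        rw [Finset.prod_mul_distrib, Finset.prod_mul_distrib,
          Finset.prod_const, Finset.prod_const, hcardblah]
        ring
    _ = (∏ i, uu (a i) t0) *
        ((s / t0) ^ S.card * ((1 - s) / (1 - t0)) ^ (n - S.card)) := by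
        rw [Finset.prod_mul_prod_compl]
    _ ≤ (∏ i, uu (a i) t0) * 1 := by
        apply mul_le_mul_of_nonneg_left hp (Finset.prod_nonneg fun i _ => hunit0 i)
    _ = ∏ i, uu (a i) t0 := mul_one _


lemma opt {n : ℕ} {a : Fin n → ℝ} (ha : ∀ i, 0 ≤ a i ∧ a i ≤ 1) {t0 : ℝ}
    (ht00 : 0 ≤ t0) (ht01 : t0 ≤ 1)
    (h1 : (((univ.filter fun i => t0 < a i).card : ℕ) : ℝ) ≤ n * t0)
    (h2 : (n : ℝ) * t0 ≤ (((univ.filter fun i => t0 ≤ a i).card : ℕ) : ℝ))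
    {s : ℝ} (hs0 : 0 ≤ s) (hs1 : s ≤ 1) :
    ∏ i, uu (a i) s ≤ ∏ i, uu (a i) t0 := by
  rcases eq_or_lt_of_le ht00 with h0 | h0
  · -- t0 = 0
    subst h0
    have hcard0 : (univ.filter fun i => (0:ℝ) < a i).card = 0 := by
      have : (((univ.filter fun i => (0:ℝ) < a i).card : ℕ) : ℝ) ≤ 0 := by simpa using h1
      exact_mod_cast le_antisymm this (by positivity)
    have hall : ∀ i, a i = 0 := by
      intro i
      by_contra hne
      have hpos : (0:ℝ) < a i := lt_of_le_of_ne (ha i).1 (Ne.symm hne)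
      have : i ∈ univ.filter fun i => (0:ℝ) < a i := by simp [hpos]
      simpa [Finset.card_eq_zero.mp hcard0] using this
    apply Finset.prod_le_prod
    · intro i _; exact uu_nonneg (ha i).1 (ha i).2 hs0 hs1
    · intro i _
      rw [hall i]
      norm_num [uu]
      linarith
  rcases eq_or_lt_of_le ht01 with h1' | h1'
  · -- t0 = 1
    subst h1'
    have hcardn : (univ.filter fun i => (1:ℝ) ≤ a i) = univ := by
      apply Finset.eq_univ_of_card
      have hge : (n : ℝ) ≤ ((univ.filter fun i => (1:ℝ) ≤ a i).card : ℝ) := by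
        simpa using h2
      have : n ≤ (univ.filter fun i => (1:ℝ) ≤ a i).card := by exact_mod_cast hge
      have hle : (univ.filter fun i => (1:ℝ) ≤ a i).card ≤ Fintype.card (Fin n) :=
        Finset.card_le_univ _
      simp only [Fintype.card_fin] at hle ⊢
      omega
    have hall : ∀ i, a i = 1 := by
      intro i
      have : i ∈ univ.filter fun i => (1:ℝ) ≤ a i := by
        rw [hcardn]; exact Finset.mem_univ i
      have := (Finset.mem_filter.mp this).2
      linarith [(ha i).2]
    apply Finset.prod_le_prod
    · intro i _; exact uu_nonneg (ha i).1 (ha i).2 hs0 hs1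
    · intro i _
      rw [hall i]
      norm_num [uu]
      linarith
  · rcases le_total s t0 with hst | hst
    · refine opt_aux ha h0 h1' hs0 hs1 (univ.filter fun i => t0 ≤ a i)
        (fun i hi => (Finset.mem_filter.mp hi).2)
        (fun i hi => by
          have : ¬ t0 ≤ a i := fun h => hi (Finset.mem_filter.mpr ⟨Finset.mem_univ i, h⟩)
          linarith)
        ?_
      apply mul_nonpos_of_nonneg_of_nonpos <;> linarith
    · refine opt_aux ha h0 h1' hs0 hs1 (univ.filter fun i => t0 < a i)
        (fun i hi => le_of_lt (Finset.mem_filter.mp hi).2)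
        (fun i hi => by
          have : ¬ t0 < a i := fun h => hi (Finset.mem_filter.mpr ⟨Finset.mem_univ i, h⟩)
          linarith)
        ?_
      apply mul_nonpos_of_nonpos_of_nonneg <;> linarith

lemma unique_max {n : ℕ} (hn : 0 < n) {a : Fin n → ℝ} (ha : ∀ i, 0 ≤ a i ∧ a i ≤ 1)
    {t t' : ℝ} (ht0 : 0 ≤ t) (ht1 : t ≤ 1) (ht0' : 0 ≤ t') (ht1' : t' ≤ 1)
    (hmax : ∀ s, 0 ≤ s → s ≤ 1 → ∏ i, uu (a i) s ≤ ∏ i, uu (a i) t)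
    (heq : ∏ i, uu (a i) t = ∏ i, uu (a i) t') (hne : t ≠ t') : False := by
  have hhalf : 0 < ∏ i, uu (a i) (1/2) :=
    Finset.prod_pos fun i _ => uu_pos (ha i).1 (ha i).2 (by norm_num) (by norm_num)
  have hFt : 0 < ∏ i, uu (a i) t :=
    lt_of_lt_of_le hhalf (hmax _ (by norm_num) (by norm_num))
  have hFt' : 0 < ∏ i, uu (a i) t' := heq ▸ hFt
  have hfac : ∀ i, 0 < uu (a i) t := by
    intro i
    rcases lt_or_eq_of_le (uu_nonneg (ha i).1 (ha i).2 ht0 ht1) with h | h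
    · exact h
    · exact absurd (Finset.prod_eq_zero (Finset.mem_univ i) h.symm) (ne_of_gt hFt)
  have hfac' : ∀ i, 0 < uu (a i) t' := by
    intro i
    rcases lt_or_eq_of_le (uu_nonneg (ha i).1 (ha i).2 ht0' ht1') with h | h
    · exact h
    · exact absurd (Finset.prod_eq_zero (Finset.mem_univ i) h.symm) (ne_of_gt hFt')
  set m := (t + t') / 2 with hmdef
  have hm0 : 0 ≤ m := by rw [hmdef]; linarith
  have hm1 : m ≤ 1 := by rw [hmdef]; linarith
  have hle : ∀ i, uu (a i) t * uu (a i) t' ≤ uu (a i) m * uu (a i) m := by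
    intro i
    have hmid := uu_midconcave t t' (ha i).1 (ha i).2
    nlinarith [sq_nonneg (uu (a i) t - uu (a i) t'), hfac i, hfac' i]
  have hstrict : ∃ i, uu (a i) t * uu (a i) t' < uu (a i) m * uu (a i) m := by
    by_cases hall : ∀ i, uu (a i) t = uu (a i) t'
    · refine ⟨⟨0, hn⟩, ?_⟩
      set i0 : Fin n := ⟨0, hn⟩
      have h00 := (ha i0).1
      have h11 := (ha i0).2
      rcases eq_or_lt_of_le h00 with hz | hz
      · exfalso
        have hthis := hall i0
        have ha0 : a i0 = 0 := hz.symm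
        norm_num [uu, ha0] at hthis
        exact hne (by linarith)
      rcases eq_or_lt_of_le h11 with ho | ho
      · exfalso
        have hthis := hall i0
        norm_num [uu, ho] at hthis
        exact hne hthis
      · have hs : uu (a i0) t < uu (a i0) m := by
          rcases lt_or_gt_of_ne hne with hlt | hgt
          · exact uu_strictmid hz ho hlt (hall i0)
          · have h2 := uu_strictmid hz ho hgt (hall i0).symm
            rw [hall i0]
            have he2 : ((t' + t) / 2) = m := by rw [hmdef]; ring
            rwa [he2] at h2
        nlinarith [hfac ⟨0, hn⟩, hall ⟨0, hn⟩, hs]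
    · push_neg at hall
      obtain ⟨i, hi⟩ := hall
      refine ⟨i, ?_⟩
      have hmid := uu_midconcave t t' (ha i).1 (ha i).2
      have hne0 : uu (a i) t - uu (a i) t' ≠ 0 := sub_ne_zero.mpr hi
      have hsq : 0 < (uu (a i) t - uu (a i) t') ^ 2 :=
        lt_of_le_of_ne (sq_nonneg _) (Ne.symm (pow_ne_zero 2 hne0))
      nlinarith [hfac i, hfac' i]
  obtain ⟨j, hj⟩ := hstrict
  have hprod : ∏ i, (uu (a i) t * uu (a i) t') < ∏ i, (uu (a i) m * uu (a i) m) := by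
    apply Finset.prod_lt_prod (fun i _ => mul_pos (hfac i) (hfac' i))
      (fun i _ => hle i) ⟨j, Finset.mem_univ j, hj⟩
  rw [Finset.prod_mul_distrib, Finset.prod_mul_distrib] at hprod
  have hFm := hmax m hm0 hm1
  have hFmnn : 0 ≤ ∏ i, uu (a i) m :=
    Finset.prod_nonneg fun i _ => uu_nonneg (ha i).1 (ha i).2 hm0 hm1
  nlinarith [hprod, hFm, hFmnn, heq]

lemma countP_ofFn {n : ℕ} (f : Fin n → ℝ) (p : ℝ → Prop) [DecidablePred p] :
    (List.ofFn f).countP (fun x => decide (p x)) = (Finset.univ.filter (fun i => p (f i))).card := by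
  rw [List.ofFn_eq_map, List.countP_map]
  rw [Fin.univ_def]
  simp [Finset.card_filter, Finset.filter, Multiset.countP_eq_card_filter, List.countP_eq_length_filter]
  rfl


lemma countP_ofFn_range {n : ℕ} (g : ℕ → ℝ) (p : ℝ → Prop) [DecidablePred p] :
    (List.ofFn (fun k : Fin n => g (k : ℕ))).countP (fun x => decide (p x))
      = (List.range n).countP (fun j => decide (p (g j))) := by
  rw [List.ofFn_eq_map, List.countP_map, ← List.map_coe_finRange_eq_range, List.countP_map]
  rfl


lemma leontief_eval {p : Fin 2 → ℝ} (hp : p ∈ stdSimplex ℝ (Fin 2)) (s : ℝ) :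
    leontief p ![1 - s, s] = uu (p 1) s := by
  obtain ⟨hnn, hsum⟩ := hp
  have hsum2 : p 0 + p 1 = 1 := by simpa [Fin.sum_univ_two] using hsum
  have h0 := hnn 0; have h1 := hnn 1
  unfold leontief uu
  by_cases ha0 : p 1 = 0
  · have hp0 : p 0 = 1 := by linarith
    have hset : {x : ℝ | ∃ j, 0 < p j ∧ x = ![1 - s, s] j / p j} = {1 - s} := by
      ext x
      simp only [Set.mem_setOf_eq, Set.mem_singleton_iff, Fin.exists_fin_two]
      simp [ha0, hp0]
    rw [hset, csInf_singleton, if_pos ha0]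
  · by_cases ha1 : p 1 = 1
    · have hp0 : p 0 = 0 := by linarith
      have hset : {x : ℝ | ∃ j, 0 < p j ∧ x = ![1 - s, s] j / p j} = {s} := by
        ext x
        simp only [Set.mem_setOf_eq, Set.mem_singleton_iff, Fin.exists_fin_two]
        simp [ha1, hp0]
      rw [hset, csInf_singleton, if_neg ha0, if_pos ha1]
    · have hpos1 : 0 < p 1 := lt_of_le_of_ne h1 (Ne.symm ha0)
      have hpos0 : 0 < p 0 := by
        rcases lt_or_eq_of_le h0 with h | h
        · exact h
        · exact absurd (by linarith : p 1 = 1) ha1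
      have hp0 : p 0 = 1 - p 1 := by linarith
      have hset : {x : ℝ | ∃ j, 0 < p j ∧ x = ![1 - s, s] j / p j}
          = {(1 - s) / (1 - p 1), s / p 1} := by
        ext x
        simp only [Set.mem_setOf_eq, Set.mem_insert_iff, Set.mem_singleton_iff,
          Fin.exists_fin_two]
        constructor
        · rintro (⟨-, rfl⟩ | ⟨-, rfl⟩)
          · left; simp [hp0]
          · right; simp
        · rintro (rfl | rfl)
          · exact Or.inl ⟨hpos0, by simp [hp0]⟩
          · exact Or.inr ⟨hpos1, by simp⟩
      rw [hset, csInf_pair, if_neg ha0, if_neg ha1]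


lemma med_props {n : ℕ} (hn : 0 < n) (a : Fin n → ℝ) (ha : ∀ i, 0 ≤ a i ∧ a i ≤ 1) :
    0 ≤ med (List.ofFn a ++ List.ofFn (fun k : Fin (n + 1) => (k : ℝ) / (n : ℝ)))
    ∧ med (List.ofFn a ++ List.ofFn (fun k : Fin (n + 1) => (k : ℝ) / (n : ℝ))) ≤ 1
    ∧ (((Finset.univ.filter fun i =>
        med (List.ofFn a ++ List.ofFn (fun k : Fin (n + 1) => (k : ℝ) / (n : ℝ))) < a i).card : ℝ)
        ≤ n * med (List.ofFn a ++ List.ofFn (fun k : Fin (n + 1) => (k : ℝ) / (n : ℝ))))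
    ∧ ((n : ℝ) * med (List.ofFn a ++ List.ofFn (fun k : Fin (n + 1) => (k : ℝ) / (n : ℝ)))
        ≤ ((Finset.univ.filter fun i =>
        med (List.ofFn a ++ List.ofFn (fun k : Fin (n + 1) => (k : ℝ) / (n : ℝ))) ≤ a i).card : ℝ)) := by
  have hnR : (0:ℝ) < n := by exact_mod_cast hn
  set l : List ℝ := List.ofFn a ++ List.ofFn (fun k : Fin (n + 1) => (k : ℝ) / (n : ℝ)) with hl
  set s : List ℝ := l.insertionSort (· ≤ ·) with hs
  have hlen : l.length = 2 * n + 1 := by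
    rw [hl]; simp; omega
  have hslen : s.length = 2 * n + 1 := by
    rw [hs, List.length_insertionSort, hlen]
  have hidx : n < s.length := by omega
  set m : ℝ := med l with hm
  have hmed : m = s[n] := by
    rw [hm]
    unfold med
    rw [← hs, hlen]
    have h2 : (2 * n + 1) / 2 = n := by omega
    rw [h2, List.getD_eq_getElem _ _ hidx]
  have hsorted : List.Pairwise (· ≤ ·) s := List.pairwise_insertionSort _ _
  have hmono : ∀ i j (hi : i < s.length) (hj : j < s.length), i ≤ j → s[i] ≤ s[j] := by
    intro i j hi hj hij
    rcases eq_or_lt_of_le hij with rfl | h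
    · exact le_refl _
    · exact List.pairwise_iff_getElem.mp hsorted i j hi hj h
  have hmem : m ∈ l := by
    rw [hmed]
    exact (List.perm_insertionSort _ l).subset (List.getElem_mem hidx)
  have hm01 : 0 ≤ m ∧ m ≤ 1 := by
    rw [hl] at hmem
    rcases List.mem_append.mp hmem with h | h
    · rw [List.mem_ofFn'] at h
      simp only [Set.mem_range] at h
      obtain ⟨i, hi⟩ := h
      rw [← hi]
      exact ⟨(ha i).1, (ha i).2⟩
    · rw [List.mem_ofFn'] at h
      simp only [Set.mem_range] at h
      obtain ⟨k, hk⟩ := h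
      rw [← hk]
      refine ⟨by positivity, ?_⟩
      show ((k:ℕ) : ℝ) / (n:ℝ) ≤ 1
      rw [div_le_one hnR]
      have hkn : (k : ℕ) ≤ n := by omega
      exact_mod_cast hkn
  have key1 : l.countP (fun x => decide (m < x)) ≤ n := by
    rw [← List.Perm.countP_eq _ (List.perm_insertionSort (· ≤ ·) l), ← hs]
    rw [← List.take_append_drop (n+1) s, List.countP_append]
    have h1 : (s.take (n+1)).countP (fun x => decide (m < x)) = 0 := by
      rw [List.countP_eq_zero]
      intro x hx
      obtain ⟨i, hi, rfl⟩ := List.mem_iff_getElem.mp hx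
      have hi' : i ≤ n := by
        rw [List.length_take] at hi
        omega
      rw [List.getElem_take]
      simp only [decide_eq_true_eq, not_lt]
      rw [hmed]
      exact hmono i n (by omega) hidx hi'
    have h2 : (s.drop (n+1)).countP (fun x => decide (m < x)) ≤ n := by
      calc (s.drop (n+1)).countP _ ≤ (s.drop (n+1)).length := List.countP_le_length
        _ = n := by rw [List.length_drop]; omega
    omega
  have key2 : l.countP (fun x => decide (x < m)) ≤ n := by
    rw [← List.Perm.countP_eq _ (List.perm_insertionSort (· ≤ ·) l), ← hs]
    rw [← List.take_append_drop n s, List.countP_append]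
    have h2 : (s.drop n).countP (fun x => decide (x < m)) = 0 := by
      rw [List.countP_eq_zero]
      intro x hx
      obtain ⟨i, hi, rfl⟩ := List.mem_iff_getElem.mp hx
      rw [List.getElem_drop]
      simp only [decide_eq_true_eq, not_lt]
      rw [hmed]
      exact hmono n (n + i) hidx (by rw [List.length_drop] at hi; omega) (by omega)
    have h1 : (s.take n).countP (fun x => decide (x < m)) ≤ n := by
      calc (s.take n).countP _ ≤ (s.take n).length := List.countP_le_length
        _ ≤ n := by rw [List.length_take]; omega
    omega
  -- phantom counts
  have hnm0 : (0:ℝ) ≤ (n:ℝ) * m := by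
    have := hm01.1; positivity
  have hnm1 : (n:ℝ) * m ≤ (n:ℝ) := by nlinarith [hm01.2]
  set c : ℕ := ⌊(n:ℝ) * m⌋₊ with hc
  have hcle : c ≤ n := by
    rw [hc]
    calc ⌊(n:ℝ) * m⌋₊ ≤ ⌊(n:ℝ)⌋₊ := Nat.floor_le_floor hnm1
      _ = n := Nat.floor_natCast n
  set c' : ℕ := ⌈(n:ℝ) * m⌉₊ with hc'
  have hc'le : c' ≤ n := by
    rw [hc']; exact Nat.ceil_le.mpr hnm1
  have hphgt : (List.ofFn fun k : Fin (n+1) => (k : ℝ) / (n:ℝ)).countP (fun x => decide (m < x))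
      = n - c := by
    rw [show (fun k : Fin (n+1) => (k : ℝ) / (n:ℝ)) = (fun k : Fin (n+1) => ((k:ℕ) : ℝ) / (n:ℝ)) from rfl]
    rw [countP_ofFn_range (fun j => (j:ℝ)/(n:ℝ)) (fun x => m < x)]
    have hsplit : n + 1 = (c + 1) + (n - c) := by omega
    rw [hsplit, List.range_add, List.countP_append]
    have e1 : (List.range (c+1)).countP (fun j : ℕ => decide (m < (j:ℝ)/(n:ℝ))) = 0 := by
      rw [List.countP_eq_zero]
      intro j hj
      rw [List.mem_range] at hj
      simp only [decide_eq_true_eq, not_lt]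
      have hj' : (j:ℝ) ≤ (n:ℝ) * m := by
        have hjc : j ≤ c := by omega
        exact (Nat.le_floor_iff hnm0).mp hjc
      rw [div_le_iff₀ hnR]
      linarith
    have e2 : ((List.range (n - c)).map (fun x => (c+1) + x)).countP
        (fun j : ℕ => decide (m < (j:ℝ)/(n:ℝ))) = n - c := by
      rw [List.countP_eq_length.mpr ?_]
      · rw [List.length_map, List.length_range]
      intro j hj
      simp only [List.mem_map, List.mem_range] at hj
      obtain ⟨x, hx, rfl⟩ := hj
      simp only [decide_eq_true_eq]
      have h1 : (n:ℝ) * m < (c:ℝ) + 1 := by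
        have := Nat.lt_floor_add_one ((n:ℝ)*m)
        rw [← hc] at this
        exact this
      have h2 : ((c:ℝ)+1) ≤ ((c+1+x : ℕ) : ℝ) := by
        push_cast
        linarith [Nat.cast_nonneg (α := ℝ) x]
      rw [lt_div_iff₀ hnR]
      nlinarith
    rw [e1, e2]; omega
  have hphlt : (List.ofFn fun k : Fin (n+1) => (k : ℝ) / (n:ℝ)).countP (fun x => decide (x < m))
      = c' := by
    rw [show (fun k : Fin (n+1) => (k : ℝ) / (n:ℝ)) = (fun k : Fin (n+1) => ((k:ℕ) : ℝ) / (n:ℝ)) from rfl]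
    rw [countP_ofFn_range (fun j => (j:ℝ)/(n:ℝ)) (fun x => x < m)]
    have hsplit : n + 1 = c' + (n + 1 - c') := by omega
    rw [hsplit, List.range_add, List.countP_append]
    have e1 : (List.range c').countP (fun j : ℕ => decide ((j:ℝ)/(n:ℝ) < m)) = c' := by
      rw [List.countP_eq_length.mpr ?_]
      · rw [List.length_range]
      intro j hj
      rw [List.mem_range] at hj
      simp only [decide_eq_true_eq]
      have hj' : (j:ℝ) < (n:ℝ) * m := by
        rw [hc'] at hj
        exact Nat.lt_ceil.mp hj
      rw [div_lt_iff₀ hnR]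
      linarith
    have e2 : ((List.range (n + 1 - c')).map (fun x => c' + x)).countP
        (fun j : ℕ => decide ((j:ℝ)/(n:ℝ) < m)) = 0 := by
      rw [List.countP_eq_zero]
      intro j hj
      simp only [List.mem_map, List.mem_range] at hj
      obtain ⟨x, hx, rfl⟩ := hj
      simp only [decide_eq_true_eq, not_lt]
      have h1 : (n:ℝ) * m ≤ ((c' + x : ℕ) : ℝ) := by
        have h2 : (n:ℝ) * m ≤ (c' : ℝ) := Nat.le_ceil _
        push_cast
        linarith [Nat.cast_nonneg (α := ℝ) x]
      rw [le_div_iff₀ hnR]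
      linarith
    rw [e1, e2]; omega
  -- assemble
  have k1 : (Finset.univ.filter fun i => m < a i).card + (n - c) ≤ n := by
    have hkk := key1
    rw [hl, List.countP_append, countP_ofFn (fun i => a i) (fun x => m < x), hphgt] at hkk
    exact hkk
  have k2 : (Finset.univ.filter fun i => a i < m).card + c' ≤ n := by
    have hkk := key2
    rw [hl, List.countP_append, countP_ofFn (fun i => a i) (fun x => x < m), hphlt] at hkk
    exact hkk
  have hcompl : (Finset.univ.filter fun i => m ≤ a i).card
      = n - (Finset.univ.filter fun i => a i < m).card := by
    have hcc : (Finset.univ.filter fun i => m ≤ a i) = (Finset.univ.filter fun i => a i < m)ᶜ := by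
      ext i
      simp [not_lt]
    rw [hcc, Finset.card_compl, Fintype.card_fin]
  refine ⟨hm01.1, hm01.2, ?_, ?_⟩
  · have hle : (Finset.univ.filter fun i => m < a i).card ≤ c := by omega
    calc ((Finset.univ.filter fun i => m < a i).card : ℝ) ≤ (c : ℝ) := by exact_mod_cast hle
      _ ≤ (n:ℝ) * m := Nat.floor_le hnm0
  · have hge : c' ≤ (Finset.univ.filter fun i => m ≤ a i).card := by omega
    calc (n:ℝ) * m ≤ (c' : ℝ) := Nat.le_ceil _
      _ ≤ ((Finset.univ.filter fun i => m ≤ a i).card : ℝ) := by exact_mod_cast hge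


/-- for two alternatives, the Nash product rule with Leontief utilities
coincides with the uniform phantom rule: `(1 - t, t)` maximizes the Nash product iff
`t` is the median of the peaks' second coordinates and the uniform phantoms
`0, 1/n, …, 1`. -/
theorem nash_eq_uniform_phantom {n : ℕ} (hn : 0 < n)
    (P : Fin n → Fin 2 → ℝ) (hP : ∀ i, P i ∈ stdSimplex ℝ (Fin 2)) (t : ℝ) :
    NashMax P ![1 - t, t] ↔
      t = med (List.ofFn (fun i => P i 1) ++
        List.ofFn (fun k : Fin (n + 1) => (k : ℝ) / (n : ℝ))) := by
  have ha : ∀ i, 0 ≤ (fun i => P i 1) i ∧ (fun i => P i 1) i ≤ 1 := by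
    intro i
    obtain ⟨hnn, hsum⟩ := hP i
    have h2 : P i 0 + P i 1 = 1 := by simpa [Fin.sum_univ_two] using hsum
    exact ⟨hnn 1, by linarith [hnn 0]⟩
  have hmem_iff : ∀ s : ℝ, (![1 - s, s] ∈ stdSimplex ℝ (Fin 2)) ↔ (0 ≤ s ∧ s ≤ 1) := by
    intro s
    constructor
    · rintro ⟨hnn, -⟩
      have h0 : (0:ℝ) ≤ 1 - s := by simpa using hnn 0
      have h1 : (0:ℝ) ≤ s := by simpa using hnn 1
      exact ⟨h1, by linarith⟩
    · rintro ⟨h0, h1⟩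
      refine ⟨?_, ?_⟩
      · intro j
        fin_cases j
        · simpa using by linarith
        · simpa using h0
      · simp [Fin.sum_univ_two]
  have hprod : ∀ s : ℝ, ∏ i, leontief (P i) ![1 - s, s] = ∏ i, uu (P i 1) s := by
    intro s
    exact Finset.prod_congr rfl fun i _ => leontief_eval (hP i) s
  have hq'eq : ∀ q' ∈ stdSimplex ℝ (Fin 2), q' = ![1 - q' 1, q' 1] := by
    intro q' hq'
    obtain ⟨hnn, hsum⟩ := hq'
    have h2 : q' 0 + q' 1 = 1 := by simpa [Fin.sum_univ_two] using hsum
    funext j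
    fin_cases j
    · show q' 0 = ![1 - q' 1, q' 1] 0
      simp only [Matrix.cons_val_zero]
      linarith
    · show q' 1 = ![1 - q' 1, q' 1] 1
      simp
  obtain ⟨hm0, hm1, hcard1, hcard2⟩ := med_props hn (fun i => P i 1) ha
  set t0 : ℝ := med (List.ofFn (fun i => P i 1) ++
    List.ofFn (fun k : Fin (n + 1) => (k : ℝ) / (n : ℝ))) with ht0
  have hNash0 : NashMax P ![1 - t0, t0] := by
    refine ⟨(hmem_iff t0).mpr ⟨hm0, hm1⟩, ?_⟩
    intro q' hq'
    have hq1 : 0 ≤ q' 1 ∧ q' 1 ≤ 1 := by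
      obtain ⟨hnn, hsum⟩ := hq'
      have h2 : q' 0 + q' 1 = 1 := by simpa [Fin.sum_univ_two] using hsum
      exact ⟨hnn 1, by linarith [hnn 0]⟩
    rw [hq'eq q' hq', hprod (q' 1), hprod t0]
    exact opt ha hm0 hm1 hcard1 hcard2 hq1.1 hq1.2
  constructor
  · intro hN
    by_contra hne
    have htmem := (hmem_iff t).mp hN.1
    refine unique_max hn ha htmem.1 htmem.2 hm0 hm1 ?_ ?_ hne
    · intro s hs0 hs1
      have h := hN.2 ![1 - s, s] ((hmem_iff s).mpr ⟨hs0, hs1⟩)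
      rwa [hprod s, hprod t] at h
    · refine le_antisymm ?_ ?_
      · have h := hNash0.2 ![1 - t, t] hN.1
        rwa [hprod t, hprod t0] at h
      · have h := hN.2 ![1 - t0, t0] ((hmem_iff t0).mpr ⟨hm0, hm1⟩)
        rwa [hprod t0, hprod t] at h
  · intro h
    rw [h]
    exact hNash0
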